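/- The DTM function with power q is 1-Lipschitz: for a Borel probability measure P on ℝ^d, m ∈ (0,1), q ≥ 1, and d(x) = ((1/m) ∫₀^m r_p(x)^q dp)^{1/q}, one has |d(x) - d(y)| ≤ ‖x - y‖ for all x, y ∈ ℝ^d. -/

import Mathlib

open MeasureTheory Metric Set
open scoped ENNReal

noncomputable def rad {d : ℕ} (P : Measure (EuclideanSpace ℝ (Fin d))) (p : ℝ)
    (x : EuclideanSpace ℝ (Fin d)) : ℝ :=
  sInf {r : ℝ | 0 < r ∧ p ≤ (P (closedBall x r)).toReal}

noncomputable def dtm {d : ℕ} (P : Measure (EuclideanSpace ℝ (Fin d))) (m q : ℝ)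
    (x : EuclideanSpace ℝ (Fin d)) : ℝ :=
  ((1 / m) * ∫ p in (0:ℝ)..m, rad P p x ^ q) ^ (1 / q)

section aux

variable {d : ℕ} (P : Measure (EuclideanSpace ℝ (Fin d)))

lemma rad_set_bddBelow (p : ℝ) (x : EuclideanSpace ℝ (Fin d)) :
    BddBelow {r : ℝ | 0 < r ∧ p ≤ (P (closedBall x r)).toReal} :=
  ⟨0, fun r hr => hr.1.le⟩

lemma rad_nonneg (p : ℝ) (x : EuclideanSpace ℝ (Fin d)) : 0 ≤ rad P p x :=
  Real.sInf_nonneg fun _ hr => hr.1.le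

lemma exists_big [IsProbabilityMeasure P] {m : ℝ} (hm : m < 1) (x : EuclideanSpace ℝ (Fin d)) :
    ∃ R : ℝ, 0 < R ∧ m ≤ (P (closedBall x R)).toReal := by
  have hU : ⋃ n : ℕ, closedBall x n = univ := by
    ext z
    simp only [mem_iUnion, mem_closedBall, mem_univ, iff_true]
    exact exists_nat_ge (dist z x)
  have hmono : Monotone fun n : ℕ => closedBall x n := fun a b hab =>
    closedBall_subset_closedBall (by exact_mod_cast hab)
  have ht : Filter.Tendsto (fun n : ℕ => P (closedBall x n)) Filter.atTop (nhds (P univ)) := by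
    rw [← hU]; exact tendsto_measure_iUnion_atTop hmono
  rw [measure_univ] at ht
  have ht' : Filter.Tendsto (fun n : ℕ => (P (closedBall x n)).toReal) Filter.atTop (nhds 1) := by
    have h1 := (ENNReal.tendsto_toReal (by norm_num : (1 : ℝ≥0∞) ≠ ⊤)).comp ht
    simpa [Function.comp_def] using h1
  obtain ⟨n, hn⟩ := (ht'.eventually (eventually_ge_nhds hm)).exists
  refine ⟨(n : ℝ) + 1, by positivity, hn.trans ?_⟩
  exact ENNReal.toReal_mono (measure_ne_top P _)
    (measure_mono (closedBall_subset_closedBall (by linarith)))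

lemma rad_set_nonempty [IsProbabilityMeasure P] {p : ℝ} (hp : p < 1)
    (x : EuclideanSpace ℝ (Fin d)) :
    {r : ℝ | 0 < r ∧ p ≤ (P (closedBall x r)).toReal}.Nonempty := by
  obtain ⟨R, hR0, hRm⟩ := exists_big P hp x
  exact ⟨R, hR0, hRm⟩

lemma rad_lip [IsProbabilityMeasure P] {p : ℝ} (hp : p < 1) (x y : EuclideanSpace ℝ (Fin d)) :
    rad P p x ≤ rad P p y + ‖x - y‖ := by
  have hne := rad_set_nonempty P hp y
  have key : ∀ r ∈ {r : ℝ | 0 < r ∧ p ≤ (P (closedBall y r)).toReal},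
      rad P p x - ‖x - y‖ ≤ r := by
    intro r hr
    rw [sub_le_iff_le_add]
    refine csInf_le (rad_set_bddBelow P p x) ?_
    refine ⟨add_pos_of_pos_of_nonneg hr.1 (norm_nonneg _), ?_⟩
    refine hr.2.trans (ENNReal.toReal_mono (measure_ne_top P _) (measure_mono ?_))
    intro z hz
    rw [mem_closedBall] at hz ⊢
    calc dist z x ≤ dist z y + dist y x := dist_triangle z y x
      _ ≤ r + ‖x - y‖ :=
          add_le_add hz (le_of_eq (by rw [dist_eq_norm, norm_sub_rev]))
  have h := le_csInf hne key
  rw [sub_le_iff_le_add] at h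
  unfold rad
  unfold rad at h
  linarith

lemma rad_aemeasurable [IsProbabilityMeasure P] {m : ℝ} (hm : m < 1)
    (x : EuclideanSpace ℝ (Fin d)) :
    AEMeasurable (fun p => rad P p x) (volume.restrict (Ioc (0:ℝ) m)) := by
  have hmono : Monotone fun p => rad P (min p m) x := by
    intro a b hab
    refine csInf_le_csInf (rad_set_bddBelow P _ x)
      (rad_set_nonempty P (lt_of_le_of_lt (min_le_right b m) hm) x) ?_
    intro r hr
    exact ⟨hr.1, le_trans (min_le_min hab le_rfl) hr.2⟩
  refine hmono.measurable.aemeasurable.congr ?_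
  filter_upwards [ae_restrict_mem measurableSet_Ioc] with p hp
  simp [min_eq_left hp.2]

lemma dtm_le [IsProbabilityMeasure P] {m q : ℝ} (hm : m ∈ Set.Ioo (0:ℝ) 1) (hq : 1 ≤ q)
    (x y : EuclideanSpace ℝ (Fin d)) : dtm P m q x ≤ dtm P m q y + ‖x - y‖ := by
  obtain ⟨hm0, hm1⟩ := hm
  have hq0 : 0 < q := lt_of_lt_of_le one_pos hq
  set c : ℝ := ‖x - y‖ with hc
  have hc0 : 0 ≤ c := norm_nonneg _
  set I : EuclideanSpace ℝ (Fin d) → ℝ≥0∞ :=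
    fun z => ∫⁻ p in Ioc (0:ℝ) m, ENNReal.ofReal (rad P p z) ^ q with hI
  -- Step A: the interval integral equals the toReal of the lintegral
  have stepA : ∀ z, (∫ p in (0:ℝ)..m, rad P p z ^ q) = (I z).toReal := by
    intro z
    rw [intervalIntegral.integral_of_le hm0.le]
    rw [integral_eq_lintegral_of_nonneg_ae]
    · congr 1
      refine lintegral_congr fun p => ?_
      rw [← ENNReal.ofReal_rpow_of_nonneg (rad_nonneg P p z) hq0.le]
    · filter_upwards with p
      exact Real.rpow_nonneg (rad_nonneg P p z) q
    · exact ((rad_aemeasurable P hm1 z).pow aemeasurable_const).aestronglyMeasurable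
  -- Step B: finiteness of I z
  have stepB : ∀ z, I z ≠ ⊤ := by
    intro z
    obtain ⟨R, hR0, hRm⟩ := exists_big P hm1 z
    have hbound : ∀ p ∈ Ioc (0:ℝ) m,
        ENNReal.ofReal (rad P p z) ^ q ≤ ENNReal.ofReal R ^ q := by
      intro p hp
      refine ENNReal.rpow_le_rpow (ENNReal.ofReal_le_ofReal ?_) hq0.le
      exact csInf_le (rad_set_bddBelow P p z) ⟨hR0, le_trans hp.2 hRm⟩
    have : I z ≤ ∫⁻ _ in Ioc (0:ℝ) m, ENNReal.ofReal R ^ q := by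
      refine lintegral_mono_ae ?_
      filter_upwards [ae_restrict_mem measurableSet_Ioc] with p hp
      exact hbound p hp
    refine ne_top_of_le_ne_top ?_ this
    rw [setLIntegral_const]
    exact ENNReal.mul_ne_top (ENNReal.rpow_ne_top_of_nonneg hq0.le ENNReal.ofReal_ne_top)
      (by simp [Real.volume_Ioc])
  -- Step C: Minkowski in ℝ≥0∞
  have hfy : AEMeasurable (fun p => ENNReal.ofReal (rad P p y))
      (volume.restrict (Ioc (0:ℝ) m)) := (rad_aemeasurable P hm1 y).ennreal_ofReal
  have stepC : (I x) ^ (1/q) ≤ (I y) ^ (1/q) + ENNReal.ofReal c * ENNReal.ofReal m ^ (1/q) := by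
    have h1 : I x ≤ ∫⁻ p in Ioc (0:ℝ) m,
        (ENNReal.ofReal (rad P p y) + ENNReal.ofReal c) ^ q := by
      refine lintegral_mono_ae ?_
      filter_upwards [ae_restrict_mem measurableSet_Ioc] with p hp
      refine ENNReal.rpow_le_rpow ?_ hq0.le
      rw [← ENNReal.ofReal_add (rad_nonneg P p y) hc0]
      exact ENNReal.ofReal_le_ofReal (rad_lip P (lt_of_le_of_lt hp.2 hm1) x y)
    have h2 := ENNReal.lintegral_Lp_add_le (μ := volume.restrict (Ioc (0:ℝ) m))
      (g := fun _ => ENNReal.ofReal c)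
      hfy aemeasurable_const hq
    have h3 : (∫⁻ _ in Ioc (0:ℝ) m, (ENNReal.ofReal c) ^ q) ^ (1/q)
        = ENNReal.ofReal c * ENNReal.ofReal m ^ (1/q) := by
      rw [setLIntegral_const, ENNReal.mul_rpow_of_nonneg _ _ (by positivity : (0:ℝ) ≤ 1/q),
        ← ENNReal.rpow_mul, mul_one_div_cancel hq0.ne', ENNReal.rpow_one,
        Real.volume_Ioc, sub_zero]
    calc (I x) ^ (1/q)
        ≤ (∫⁻ p in Ioc (0:ℝ) m,
            (ENNReal.ofReal (rad P p y) + ENNReal.ofReal c) ^ q) ^ (1/q) :=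
          ENNReal.rpow_le_rpow h1 (by positivity)
      _ ≤ (I y) ^ (1/q) + (∫⁻ _ in Ioc (0:ℝ) m, (ENNReal.ofReal c) ^ q) ^ (1/q) := h2
      _ = (I y) ^ (1/q) + ENNReal.ofReal c * ENNReal.ofReal m ^ (1/q) := by rw [h3]
  -- Step D: pass to toReal
  have stepD : (I x).toReal ^ (1/q) ≤ (I y).toReal ^ (1/q) + c * m ^ (1/q) := by
    have hrhs : (I y) ^ (1/q) + ENNReal.ofReal c * ENNReal.ofReal m ^ (1/q) ≠ ⊤ := by
      refine ENNReal.add_ne_top.2 ⟨?_, ?_⟩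
      · exact ENNReal.rpow_ne_top_of_nonneg (by positivity) (stepB y)
      · exact ENNReal.mul_ne_top ENNReal.ofReal_ne_top
          (ENNReal.rpow_ne_top_of_nonneg (by positivity) ENNReal.ofReal_ne_top)
    have h := ENNReal.toReal_mono hrhs stepC
    rw [ENNReal.toReal_add (ENNReal.rpow_ne_top_of_nonneg (by positivity) (stepB y))
      (ENNReal.mul_ne_top ENNReal.ofReal_ne_top
        (ENNReal.rpow_ne_top_of_nonneg (by positivity) ENNReal.ofReal_ne_top)),
      ENNReal.toReal_mul, ← ENNReal.toReal_rpow, ← ENNReal.toReal_rpow, ← ENNReal.toReal_rpow,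
      ENNReal.toReal_ofReal hc0, ENNReal.toReal_ofReal hm0.le] at h
    exact h
  -- Step E: conclude
  have hdtm : ∀ z, dtm P m q z = (1/m) ^ (1/q) * (I z).toReal ^ (1/q) := by
    intro z
    rw [dtm, stepA z, Real.mul_rpow (by positivity) ENNReal.toReal_nonneg]
  rw [hdtm x, hdtm y]
  have hmm : (1/m) ^ (1/q) * (m ^ (1/q)) = 1 := by
    rw [← Real.mul_rpow (by positivity) hm0.le, one_div, inv_mul_cancel₀ hm0.ne',
      Real.one_rpow]
  calc (1/m) ^ (1/q) * (I x).toReal ^ (1/q)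
      ≤ (1/m) ^ (1/q) * ((I y).toReal ^ (1/q) + c * m ^ (1/q)) := by
        exact mul_le_mul_of_nonneg_left stepD (by positivity)
    _ = (1/m) ^ (1/q) * (I y).toReal ^ (1/q) + ((1/m) ^ (1/q) * m ^ (1/q)) * c := by ring
    _ = (1/m) ^ (1/q) * (I y).toReal ^ (1/q) + c := by rw [hmm, one_mul]

end aux

theorem stmt3 {d : ℕ} (P : Measure (EuclideanSpace ℝ (Fin d))) [IsProbabilityMeasure P]
    (m q : ℝ) (hm : m ∈ Set.Ioo (0:ℝ) 1) (hq : 1 ≤ q)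
    (x y : EuclideanSpace ℝ (Fin d)) :
    |dtm P m q x - dtm P m q y| ≤ ‖x - y‖ := by
  rw [abs_sub_le_iff]
  constructor
  · have := dtm_le P hm hq x y
    linarith
  · have := dtm_le P hm hq y x
    rw [norm_sub_rev] at this
    linarith
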